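/- Let d ≥ 1, let K : ℝ^d → [0,∞) be a measurable even kernel with ∫_{ℝ^d} K(x)|x| dx < ∞, let p̂ ∈ S^{d−1}, set H := {x ∈ ℝ^d : x·p̂ > 0}, and let δ ∈ (0,1). Let (E_ε)_{ε>0} be a family of measurable subsets of ℝ^d such that E_ε Δ H ⊂ B_{1−δ} for every ε > 0 and χ_{E_ε} → χ_H in L¹(B) as ε → 0⁺. Then liminf_{ε→0⁺} (1/ε)(J¹_ε(E_ε;B) − J¹_ε(H;B)) ≥ 0. -/

import Mathlib

open MeasureTheory ENNReal Topology Filter RealInnerProductSpace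

/-- Euclidean space `ℝ^d`. -/
abbrev Ed (d : ℕ) := EuclideanSpace ℝ (Fin d)

/-- The rescaled kernel `K_ε(x) = ε^{−d} K(x/ε)`. -/
noncomputable def Keps {d : ℕ} (K : Ed d → ℝ) (ε : ℝ) (x : Ed d) : ℝ :=
  (ε ^ d)⁻¹ * K (ε⁻¹ • x)

/-- The interaction energy
`J¹_ε(E；B) = (1/2)∫_B∫_B K_ε(y−x)|χ_E(y)−χ_E(x)| dy dx`, `B` the unit ball. -/
noncomputable def J1eps {d : ℕ} (K : Ed d → ℝ) (ε : ℝ) (E : Set (Ed d)) : ℝ≥0∞ :=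
  (1 / 2) * ∫⁻ x in Metric.ball (0 : Ed d) 1, ∫⁻ y in Metric.ball (0 : Ed d) 1,
    ENNReal.ofReal (Keps K ε (y - x)) *
      ENNReal.ofReal |E.indicator (fun _ => (1 : ℝ)) y - E.indicator (fun _ => (1 : ℝ)) x|

section Aux
variable {d : ℕ}

/-- characteristic function -/
noncomputable def chi (E : Set (Ed d)) : Ed d → ℝ := E.indicator fun _ => 1

lemma measurable_chi {E : Set (Ed d)} (hE : MeasurableSet E) : Measurable (chi E) :=
  measurable_const.indicator hE

lemma chi_nonneg (E : Set (Ed d)) (x : Ed d) : 0 ≤ chi E x := by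
  unfold chi; by_cases h : x ∈ E <;> simp [h]

lemma chi_le_one (E : Set (Ed d)) (x : Ed d) : chi E x ≤ 1 := by
  unfold chi; by_cases h : x ∈ E <;> simp [h]

/-- the function `G`: measure-type quantity `∫_{B ∩ (B - z)} |χ_E(x+z) - χ_E(x)| dx`. -/
noncomputable def GG (E : Set (Ed d)) (z : Ed d) : ℝ≥0∞ :=
  ∫⁻ x, (Metric.ball (0 : Ed d) 1).indicator 1 x *
    (Metric.ball (0 : Ed d) 1).indicator 1 (x + z) *
      ENNReal.ofReal |chi E (x + z) - chi E x|

lemma measurable_keps (K : Ed d → ℝ) (hK : Measurable K) (ε : ℝ) :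
    Measurable (Keps K ε) :=
  measurable_const.mul (hK.comp (measurable_id.const_smul ε⁻¹))

lemma J1eps_eq_z (K : Ed d → ℝ) (hK : Measurable K) (ε : ℝ)
    {E : Set (Ed d)} (hE : MeasurableSet E) :
    J1eps K ε E = 2⁻¹ * ∫⁻ z, ENNReal.ofReal (Keps K ε z) * GG E z := by
  classical
  set B := Metric.ball (0 : Ed d) 1 with hBdef
  have hBm : MeasurableSet B := measurableSet_ball
  -- F x z
  set F : Ed d → Ed d → ℝ≥0∞ := fun x z =>
    ENNReal.ofReal (Keps K ε z) *
      (B.indicator 1 x * B.indicator 1 (x + z) * ENNReal.ofReal |chi E (x + z) - chi E x|)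
    with hF
  have step1 : ∀ x : Ed d,
      (∫⁻ y in B, ENNReal.ofReal (Keps K ε (y - x)) * ENNReal.ofReal |chi E y - chi E x|)
        = ∫⁻ z, B.indicator 1 (x + z) *
            (ENNReal.ofReal (Keps K ε z) * ENNReal.ofReal |chi E (x + z) - chi E x|) := by
    intro x
    rw [← lintegral_indicator hBm]
    rw [← lintegral_add_left_eq_self
      (fun y => B.indicator (fun y =>
        ENNReal.ofReal (Keps K ε (y - x)) * ENNReal.ofReal |chi E y - chi E x|) y) x]
    refine lintegral_congr fun z => ?_
    by_cases h : x + z ∈ B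
    · simp [Set.indicator_of_mem, h, add_sub_cancel_left]
    · simp [Set.indicator_of_notMem, h]
  have step2 : J1eps K ε E = 2⁻¹ * ∫⁻ x, ∫⁻ z, F x z := by
    rw [J1eps, one_div]
    congr 1
    rw [← lintegral_indicator hBm]
    refine lintegral_congr fun x => ?_
    by_cases hx : x ∈ B
    · rw [Set.indicator_of_mem hx]
      rw [show (fun y => ENNReal.ofReal (Keps K ε (y - x)) *
          ENNReal.ofReal |E.indicator (fun _ => (1:ℝ)) y - E.indicator (fun _ => (1:ℝ)) x|)
          = (fun y => ENNReal.ofReal (Keps K ε (y - x)) *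
          ENNReal.ofReal |chi E y - chi E x|) from rfl]
      rw [step1 x]
      refine lintegral_congr fun z => ?_
      rw [hF]
      simp only [Set.indicator_of_mem hx]
      simp only [Pi.one_apply, one_mul]
      ring
    · rw [Set.indicator_of_notMem hx]
      symm
      simp only [hF, Set.indicator_of_notMem hx]
      simp [lintegral_zero]
  rw [step2]
  congr 1
  have hmeas : AEMeasurable (Function.uncurry F) (volume.prod volume) := by
    apply Measurable.aemeasurable
    have h1 : Measurable fun q : Ed d × Ed d => B.indicator (1 : Ed d → ℝ≥0∞) q.1 :=
      (measurable_const.indicator hBm).comp measurable_fst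
    have hadd : Measurable fun q : Ed d × Ed d => q.1 + q.2 :=
      measurable_fst.add measurable_snd
    have h2 : Measurable fun q : Ed d × Ed d => B.indicator (1 : Ed d → ℝ≥0∞) (q.1 + q.2) :=
      (measurable_const.indicator hBm).comp hadd
    have h3 : Measurable fun q : Ed d × Ed d => ENNReal.ofReal (Keps K ε q.2) :=
      ENNReal.measurable_ofReal.comp ((measurable_keps K hK ε).comp measurable_snd)
    have h4 : Measurable fun q : Ed d × Ed d =>
        ENNReal.ofReal |chi E (q.1 + q.2) - chi E q.1| :=
      ENNReal.measurable_ofReal.comp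
        ((((measurable_chi hE).comp hadd).sub ((measurable_chi hE).comp measurable_fst)).abs)
    exact h3.mul ((h1.mul h2).mul h4)
  rw [lintegral_lintegral_swap hmeas]
  refine lintegral_congr fun z => ?_
  rw [hF]
  simp only []
  rw [lintegral_const_mul' _ _ ENNReal.ofReal_ne_top]
  rfl

end Aux

section More
variable {d : ℕ}

/-- the slice set `B ∩ (B - z)` -/
def SS (d : ℕ) (z : Ed d) : Set (Ed d) :=
  Metric.ball (0 : Ed d) 1 ∩ (fun x => x + z) ⁻¹' Metric.ball (0 : Ed d) 1

lemma measurableSet_SS (z : Ed d) : MeasurableSet (SS d z) :=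
  measurableSet_ball.inter ((measurable_id.add_const z) measurableSet_ball)

lemma SS_subset_ball (z : Ed d) : SS d z ⊆ Metric.ball (0 : Ed d) 1 := Set.inter_subset_left

lemma volume_SS_lt_top (z : Ed d) : volume (SS d z) < ⊤ :=
  lt_of_le_of_lt (measure_mono (SS_subset_ball z)) measure_ball_lt_top

lemma GG_eq_set (E : Set (Ed d)) (z : Ed d) :
    GG E z = ∫⁻ x in SS d z, ENNReal.ofReal |chi E (x + z) - chi E x| := by
  rw [GG, ← lintegral_indicator (measurableSet_SS z)]
  refine lintegral_congr fun x => ?_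
  have hmem : x ∈ SS d z ↔ (x ∈ Metric.ball (0 : Ed d) 1 ∧ x + z ∈ Metric.ball (0 : Ed d) 1) :=
    Iff.rfl
  by_cases h1 : x ∈ Metric.ball (0 : Ed d) 1 <;>
    by_cases h2 : x + z ∈ Metric.ball (0 : Ed d) 1
  · rw [Set.indicator_of_mem (hmem.mpr ⟨h1, h2⟩)]
    simp [Set.indicator_of_mem, h1, h2]
  · rw [Set.indicator_of_notMem (fun hc => h2 (hmem.mp hc).2)]
    simp [Set.indicator_of_mem h1, Set.indicator_of_notMem h2]
  · rw [Set.indicator_of_notMem (fun hc => h1 (hmem.mp hc).1)]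
    simp [Set.indicator_of_notMem h1]
  · rw [Set.indicator_of_notMem (fun hc => h1 (hmem.mp hc).1)]
    simp [Set.indicator_of_notMem h1]

lemma integrableOn_SS {f : Ed d → ℝ} (hf : Measurable f) (hbd : ∀ x, |f x| ≤ 1) (z : Ed d) :
    IntegrableOn f (SS d z) := by
  haveI : IsFiniteMeasure (volume.restrict (SS d z)) :=
    ⟨by rw [Measure.restrict_apply_univ]; exact volume_SS_lt_top z⟩
  exact Integrable.mono' (integrable_const 1) hf.aestronglyMeasurable
    (Filter.Eventually.of_forall fun x => (hbd x).trans (by norm_num))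

lemma GG_eq_ofReal (E : Set (Ed d)) (hE : MeasurableSet E) (z : Ed d) :
    GG E z = ENNReal.ofReal (∫ x in SS d z, |chi E (x + z) - chi E x|) := by
  rw [GG_eq_set]
  rw [← ofReal_integral_eq_lintegral_ofReal]
  · exact integrableOn_SS (((measurable_chi hE).comp (measurable_id.add_const z)).sub
      (measurable_chi hE)).abs
      (fun x => by
        simp only [Function.comp, id_eq]
        rw [abs_abs]
        have h1 := chi_nonneg E (x + z); have h2 := chi_le_one E (x + z)
        have h3 := chi_nonneg E x; have h4 := chi_le_one E x
        rw [Pi.sub_apply, Function.comp_apply, abs_sub_le_iff]; constructor <;> linarith) z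
  · exact Filter.Eventually.of_forall fun x => abs_nonneg _

section Key
variable {d : ℕ}

lemma setIntegral_shift (f : Ed d → ℝ) (z : Ed d) (s : Set (Ed d)) (hs : MeasurableSet s) :
    ∫ x in s, f (x + z) = ∫ x in (fun x => x - z) ⁻¹' s, f x := by
  have hs' : MeasurableSet ((fun x => x - z) ⁻¹' s) := (measurable_id.sub_const z) hs
  rw [← integral_indicator hs, ← integral_indicator hs']
  rw [← integral_add_right_eq_self (fun y => ((fun x => x - z) ⁻¹' s).indicator f y) z]
  congr 1; funext x
  by_cases hx : x ∈ s
  · rw [Set.indicator_of_mem hx, Set.indicator_of_mem]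
    simpa using hx
  · rw [Set.indicator_of_notMem hx, Set.indicator_of_notMem]
    simpa using hx

lemma measurableSet_H (p : Ed d) : MeasurableSet {x : Ed d | 0 < ⟪x, p⟫} :=
  (isOpen_lt continuous_const (continuous_id.inner continuous_const)).measurableSet

lemma key_mono {p : Ed d} (hp : ‖p‖ = 1) {δ : ℝ} (hδ0 : 0 < δ) (hδ1 : δ < 1)
    {E : Set (Ed d)} (hE : MeasurableSet E)
    (hEH : symmDiff E {x : Ed d | 0 < ⟪x, p⟫} ⊆ Metric.closedBall (0 : Ed d) (1 - δ))
    {z : Ed d} (hz : ‖z‖ < δ) :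
    GG {x : Ed d | 0 < ⟪x, p⟫} z ≤ GG E z := by
  classical
  set H : Set (Ed d) := {x : Ed d | 0 < ⟪x, p⟫} with hHdef
  have hH : MeasurableSet H := measurableSet_H p
  set S : Set (Ed d) := SS d z with hSdef
  have hSm : MeasurableSet S := measurableSet_SS z
  set A : Set (Ed d) := (fun x => x - z) ⁻¹' S with hAdef
  have hAm : MeasurableSet A := (measurable_id.sub_const z) hSm
  -- closedBall ⊆ S and ⊆ A
  have hcbS : Metric.closedBall (0 : Ed d) (1 - δ) ⊆ S := by
    intro x hx
    rw [Metric.mem_closedBall, dist_zero_right] at hx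
    constructor
    · rw [Metric.mem_ball, dist_zero_right]; linarith
    · rw [Set.mem_preimage, Metric.mem_ball, dist_zero_right]
      calc ‖x + z‖ ≤ ‖x‖ + ‖z‖ := norm_add_le x z
        _ < 1 := by linarith
  have hcbA : Metric.closedBall (0 : Ed d) (1 - δ) ⊆ A := by
    intro x hx
    rw [Metric.mem_closedBall, dist_zero_right] at hx
    rw [hAdef, Set.mem_preimage]
    constructor
    · rw [Metric.mem_ball, dist_zero_right]
      calc ‖x - z‖ ≤ ‖x‖ + ‖z‖ := norm_sub_le x z
        _ < 1 := by linarith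
    · rw [Set.mem_preimage, sub_add_cancel, Metric.mem_ball, dist_zero_right]; linarith
  -- u vanishes off closedBall
  have hu0 : ∀ x, x ∉ Metric.closedBall (0 : Ed d) (1 - δ) → chi E x - chi H x = 0 := by
    intro x hx
    have hxs : x ∉ symmDiff E H := fun hc => hx (hEH hc)
    rw [Set.mem_symmDiff] at hxs
    push_neg at hxs
    by_cases hxE : x ∈ E
    · have hxH : x ∈ H := hxs.1 hxE
      simp [chi, hxE, hxH]
    · have hxH : x ∉ H := fun hh => hxE (hxs.2 hh)
      simp [chi, hxE, hxH]
  -- integrability facts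
  have hbd1 : ∀ (F : Set (Ed d)) (x : Ed d), |chi F x| ≤ 1 := fun F x => by
    rw [abs_of_nonneg (chi_nonneg F x)]; exact chi_le_one F x
  have hintS : ∀ (F : Set (Ed d)), MeasurableSet F → IntegrableOn (chi F) S := by
    intro F hF
    exact integrableOn_SS (measurable_chi hF) (hbd1 F) z
  have hintSz : ∀ (F : Set (Ed d)), MeasurableSet F →
      IntegrableOn (fun x => chi F (x + z)) S := by
    intro F hF
    exact integrableOn_SS ((measurable_chi hF).comp (measurable_id.add_const z))
      (fun x => hbd1 F (x + z)) z
  have hvolA : volume A < ⊤ := by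
    refine lt_of_le_of_lt (measure_mono ?_) (measure_ball_lt_top (x := (0 : Ed d)) (r := 2))
    intro x hx
    have : x - z ∈ Metric.ball (0 : Ed d) 1 := hx.1
    rw [Metric.mem_ball, dist_zero_right] at this ⊢
    calc ‖x‖ = ‖x - z + z‖ := by rw [sub_add_cancel]
      _ ≤ ‖x - z‖ + ‖z‖ := norm_add_le _ _
      _ < 2 := by linarith
  have hintA : ∀ (F : Set (Ed d)), MeasurableSet F → IntegrableOn (chi F) A := by
    intro F hF
    haveI : IsFiniteMeasure (volume.restrict A) :=
      ⟨by rw [Measure.restrict_apply_univ]; exact hvolA⟩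
    exact Integrable.mono' (integrable_const 1) (measurable_chi hF).aestronglyMeasurable
      (Filter.Eventually.of_forall fun x => (hbd1 F x).trans (by norm_num))
  have hintuA : IntegrableOn (fun x => chi E x - chi H x) A :=
    (hintA E hE).sub (hintA H hH)
  have hintuS : IntegrableOn (fun x => chi E x - chi H x) S :=
    (hintS E hE).sub (hintS H hH)
  -- D F = ∫_A chi F - ∫_S chi F ; shift identity
  have hshift : ∀ (F : Set (Ed d)), MeasurableSet F →
      ∫ x in S, chi F (x + z) = ∫ x in A, chi F x := by
    intro F hF
    exact setIntegral_shift (chi F) z S hSm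
  -- cancellation: ∫_A u = ∫_S u
  have hAu : ∫ x in A, (chi E x - chi H x) = ∫ x, (chi E x - chi H x) :=
    setIntegral_eq_integral_of_forall_compl_eq_zero fun x hx => hu0 x (fun hc => hx (hcbA hc))
  have hSu : ∫ x in S, (chi E x - chi H x) = ∫ x, (chi E x - chi H x) :=
    setIntegral_eq_integral_of_forall_compl_eq_zero fun x hx => hu0 x (fun hc => hx (hcbS hc))
  -- D E = D H
  have hDE : ∫ x in S, (chi E (x + z) - chi E x) = ∫ x in S, (chi H (x + z) - chi H x) := by
    rw [integral_sub (hintSz E hE) (hintS E hE), integral_sub (hintSz H hH) (hintS H hH)]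
    rw [hshift E hE, hshift H hH]
    have hAsplit : ∫ x in A, chi E x = (∫ x in A, chi H x) + ∫ x in A, (chi E x - chi H x) := by
      rw [← integral_add (hintA H hH) hintuA]
      congr 1; funext x; ring
    have hSsplit : ∫ x in S, chi E x = (∫ x in S, chi H x) + ∫ x in S, (chi E x - chi H x) := by
      rw [← integral_add (hintS H hH) hintuS]
      congr 1; funext x; ring
    rw [hAsplit, hSsplit, hAu, hSu]
    ring
  -- sign analysis and conclusion
  rw [GG_eq_ofReal H hH z, GG_eq_ofReal E hE z]
  apply ENNReal.ofReal_le_ofReal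
  have habs : |∫ x in S, (chi E (x + z) - chi E x)| ≤ ∫ x in S, |chi E (x + z) - chi E x| := by
    have := norm_integral_le_integral_norm (f := fun x => chi E (x + z) - chi E x)
      (μ := volume.restrict S)
    simpa [Real.norm_eq_abs] using this
  have hIH : ∫ x in S, |chi H (x + z) - chi H x| = |∫ x in S, (chi H (x + z) - chi H x)| := by
    by_cases hsgn : 0 ≤ ⟪z, p⟫
    · have hmono : ∀ x : Ed d, chi H x ≤ chi H (x + z) := by
        intro x
        by_cases hx : x ∈ H
        · have hx2 : x + z ∈ H := by
            rw [hHdef, Set.mem_setOf_eq, inner_add_left]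
            have : 0 < ⟪x, p⟫ := hx
            linarith
          simp [chi, hx, hx2]
        · simp [chi, hx, Set.indicator_apply]
          by_cases hx2 : x + z ∈ H <;> simp [hx2]
      rw [abs_of_nonneg (integral_nonneg fun x => sub_nonneg.mpr (hmono x))]
      congr 1; funext x
      rw [abs_of_nonneg (sub_nonneg.mpr (hmono x))]
    · push_neg at hsgn
      have hmono : ∀ x : Ed d, chi H (x + z) ≤ chi H x := by
        intro x
        by_cases hx2 : x + z ∈ H
        · have hx : x ∈ H := by
            rw [hHdef, Set.mem_setOf_eq]
            have : 0 < ⟪x + z, p⟫ := hx2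
            rw [inner_add_left] at this
            linarith
          simp [chi, hx, hx2]
        · simp [chi, hx2, Set.indicator_apply]
          by_cases hx : x ∈ H <;> simp [hx]
      rw [abs_of_nonpos (integral_nonpos fun x => sub_nonpos.mpr (hmono x))]
      rw [← integral_neg]
      congr 1; funext x
      rw [abs_of_nonpos (sub_nonpos.mpr (hmono x))]
  calc ∫ x in S, |chi H (x + z) - chi H x|
      = |∫ x in S, (chi H (x + z) - chi H x)| := hIH
    _ = |∫ x in S, (chi E (x + z) - chi E x)| := by rw [hDE]
    _ ≤ ∫ x in S, |chi E (x + z) - chi E x| := habs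

end Key

section Slab
variable {d : ℕ}

lemma volume_slab (hd : 1 ≤ d) {p : Ed d} (hp : ‖p‖ = 1) (r : ℝ) (hr : 0 ≤ r) :
    volume ({x : Ed d | |⟪x, p⟫| ≤ r} ∩ Metric.ball (0 : Ed d) 1)
      ≤ ENNReal.ofReal (2 ^ d * r) := by
  classical
  set i0 : Fin d := ⟨0, hd⟩ with hi0
  set e0 : Ed d := EuclideanSpace.single i0 (1 : ℝ) with he0
  have he0n : ‖e0‖ = 1 := by rw [he0, EuclideanSpace.norm_single]; norm_num
  set T : Ed d ≃ₗᵢ[ℝ] Ed d := Submodule.reflection (ℝ ∙ (e0 - p))ᗮ with hT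
  have hTe0 : T e0 = p := Submodule.reflection_sub (by rw [he0n, hp])
  have hTmp : MeasurePreserving T volume volume := T.measurePreserving
  set W : Set (Ed d) := {x : Ed d | |⟪x, p⟫| ≤ r} ∩ Metric.ball (0 : Ed d) 1 with hW
  have hWmeas : MeasurableSet W := by
    apply MeasurableSet.inter
    · exact (isClosed_le ((continuous_id.inner continuous_const).abs) continuous_const)
        |>.measurableSet
    · exact measurableSet_ball
  have h1 : volume W = volume (T ⁻¹' W) := (hTmp.measure_preimage hWmeas.nullMeasurableSet).symm
  -- coordinates
  set a : Fin d → ℝ := fun i => if i = i0 then -(min r 1) else -1 with ha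
  set b : Fin d → ℝ := fun i => if i = i0 then (min r 1) else 1 with hb
  have hsub : T ⁻¹' W ⊆ (MeasurableEquiv.toLp 2 (Fin d → ℝ)).symm ⁻¹' (Set.Icc a b) := by
    intro y hy
    have hyW : T y ∈ W := hy
    have hin : |⟪T y, p⟫| ≤ r := hyW.1
    have hnrm : ‖y‖ < 1 := by
      have := hyW.2
      rw [Metric.mem_ball, dist_zero_right] at this
      rwa [T.norm_map y] at this
    have hcoord : ∀ i : Fin d, |y i| ≤ 1 := by
      intro i
      have h2 : |⟪y, EuclideanSpace.single i (1:ℝ)⟫| ≤ ‖y‖ * ‖EuclideanSpace.single i (1:ℝ)‖ :=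
        abs_real_inner_le_norm _ _
      rw [EuclideanSpace.norm_single] at h2
      rw [EuclideanSpace.inner_single_right] at h2
      simp only [norm_one, mul_one, RCLike.star_def, starRingEnd_apply, star_trivial,
        one_mul] at h2
      calc |y i| ≤ ‖y‖ := by simpa using h2
        _ ≤ 1 := hnrm.le
    have hi0c : |y i0| ≤ min r 1 := by
      have : ⟪T y, p⟫ = y i0 := by
        rw [← hTe0, T.inner_map_map, he0, EuclideanSpace.inner_single_right]
        simp
      rw [this] at hin
      exact le_min hin (hcoord i0)
    simp only [Set.mem_preimage]
    have : ∀ i, y i ∈ Set.Icc (a i) (b i) := by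
      intro i
      by_cases hii : i = i0
      · subst hii
        rw [ha, hb]
        simp only [if_pos rfl]
        exact abs_le.mp hi0c
      · rw [ha, hb]
        simp only [if_neg hii]
        exact abs_le.mp (hcoord i)
    exact Set.mem_Icc.mpr ⟨fun i => (this i).1, fun i => (this i).2⟩
  have h2 : volume ((MeasurableEquiv.toLp 2 (Fin d → ℝ)).symm ⁻¹' (Set.Icc a b))
      = volume (Set.Icc a b) :=
    (EuclideanSpace.volume_preserving_symm_measurableEquiv_toLp (Fin d)).measure_preimage
      measurableSet_Icc.nullMeasurableSet
  have h3 : volume (Set.Icc a b) = ∏ i : Fin d, ENNReal.ofReal (b i - a i) :=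
    Real.volume_Icc_pi
  have h4 : ∏ i : Fin d, ENNReal.ofReal (b i - a i) ≤ ENNReal.ofReal (2 ^ d * r) := by
    have hprod : ∏ i : Fin d, ENNReal.ofReal (b i - a i)
        = ENNReal.ofReal (2 * min r 1) * ∏ i ∈ Finset.univ.erase i0,
            ENNReal.ofReal (b i - a i) := by
      rw [← Finset.mul_prod_erase Finset.univ _ (Finset.mem_univ i0)]
      congr 1
      simp only [ha, hb, if_pos rfl]
      congr 1
      ring
    rw [hprod]
    have hrest : ∏ i ∈ Finset.univ.erase i0, ENNReal.ofReal (b i - a i)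
        = ENNReal.ofReal 2 ^ (d - 1) := by
      have hstep : ∏ i ∈ Finset.univ.erase i0, ENNReal.ofReal (b i - a i)
          = ∏ _i ∈ Finset.univ.erase i0, ENNReal.ofReal 2 := by
        refine Finset.prod_congr rfl (fun i hi => ?_)
        simp only [hb, ha, if_neg (Finset.ne_of_mem_erase hi)]
        norm_num
      rw [hstep, Finset.prod_const]
      congr 1
      rw [Finset.card_erase_of_mem (Finset.mem_univ i0), Finset.card_univ, Fintype.card_fin]
    rw [hrest]
    calc ENNReal.ofReal (2 * min r 1) * ENNReal.ofReal 2 ^ (d - 1)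
        ≤ ENNReal.ofReal (2 * r) * ENNReal.ofReal 2 ^ (d - 1) := by
          gcongr
          exact min_le_left r 1
      _ = ENNReal.ofReal (2 * r * 2 ^ (d - 1)) := by
          rw [← ENNReal.ofReal_pow (by norm_num : (0:ℝ) ≤ 2)]
          rw [← ENNReal.ofReal_mul (by positivity)]
      _ = ENNReal.ofReal (2 ^ d * r) := by
          congr 1
          have h2d : (2:ℝ) * 2 ^ (d - 1) = 2 ^ d := by
            rw [← pow_succ']
            congr 1
            omega
          calc (2:ℝ) * r * 2 ^ (d - 1) = (2 * 2 ^ (d - 1)) * r := by ring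
            _ = 2 ^ d * r := by rw [h2d]
  calc volume W = volume (T ⁻¹' W) := h1
    _ ≤ volume ((MeasurableEquiv.toLp 2 (Fin d → ℝ)).symm ⁻¹' (Set.Icc a b)) :=
        measure_mono hsub
    _ = ∏ i : Fin d, ENNReal.ofReal (b i - a i) := by rw [h2, h3]
    _ ≤ ENNReal.ofReal (2 ^ d * r) := h4

lemma GG_slab (hd : 1 ≤ d) {p : Ed d} (hp : ‖p‖ = 1) (z : Ed d) :
    GG {x : Ed d | 0 < ⟪x, p⟫} z ≤ ENNReal.ofReal (2 ^ d * ‖z‖) := by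
  classical
  set H : Set (Ed d) := {x : Ed d | 0 < ⟪x, p⟫} with hHdef
  set W : Set (Ed d) := {x : Ed d | |⟪x, p⟫| ≤ ‖z‖} with hWdef
  have hzp : |⟪z, p⟫| ≤ ‖z‖ := by
    calc |⟪z, p⟫| ≤ ‖z‖ * ‖p‖ := abs_real_inner_le_norm z p
      _ = ‖z‖ := by rw [hp, mul_one]
  have hpt : ∀ x : Ed d, ENNReal.ofReal |chi H (x + z) - chi H x|
      ≤ W.indicator (1 : Ed d → ℝ≥0∞) x := by
    intro x
    by_cases hx : x ∈ W
    · rw [Set.indicator_of_mem hx]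
      simp only [Pi.one_apply]
      apply ENNReal.ofReal_le_one.mpr
      have h1 := chi_nonneg H (x + z); have h2 := chi_le_one H (x + z)
      have h3 := chi_nonneg H x; have h4 := chi_le_one H x
      rw [abs_sub_le_iff]; constructor <;> linarith
    · rw [Set.indicator_of_notMem hx]
      have hxW : ¬ |⟪x, p⟫| ≤ ‖z‖ := hx
      push_neg at hxW
      have heq : chi H (x + z) = chi H x := by
        by_cases hmem : x ∈ H
        · have h5 : 0 < ⟪x, p⟫ := hmem
          have h6 : x + z ∈ H := by
            rw [hHdef, Set.mem_setOf_eq, inner_add_left]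
            have : -⟪z, p⟫ ≤ |⟪z, p⟫| := neg_le_abs _
            have h7 : |⟪x, p⟫| = ⟪x, p⟫ := abs_of_pos h5
            rw [h7] at hxW
            linarith
          simp [chi, hmem, h6]
        · have h5 : ⟪x, p⟫ ≤ 0 := not_lt.mp hmem
          have h6 : x + z ∉ H := by
            rw [hHdef, Set.mem_setOf_eq, inner_add_left, not_lt]
            have : ⟪z, p⟫ ≤ |⟪z, p⟫| := le_abs_self _
            have h7 : |⟪x, p⟫| = -⟪x, p⟫ := abs_of_nonpos h5
            rw [h7] at hxW
            linarith
          simp [chi, hmem, h6]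
      rw [heq]
      simp
  have hWmeas : MeasurableSet W :=
    (isClosed_le ((continuous_id.inner continuous_const).abs) continuous_const).measurableSet
  calc GG H z = ∫⁻ x in SS d z, ENNReal.ofReal |chi H (x + z) - chi H x| := GG_eq_set H z
    _ ≤ ∫⁻ x in SS d z, W.indicator 1 x := lintegral_mono fun x => hpt x
    _ ≤ ∫⁻ x in Metric.ball (0 : Ed d) 1, W.indicator 1 x :=
        lintegral_mono_set (SS_subset_ball z)
    _ = volume (W ∩ Metric.ball (0 : Ed d) 1) := by
        rw [← lintegral_indicator measurableSet_ball]
        rw [← lintegral_indicator_one (hWmeas.inter measurableSet_ball)]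
        refine lintegral_congr fun x => ?_
        by_cases h1 : x ∈ W <;> by_cases h2 : x ∈ Metric.ball (0 : Ed d) 1 <;>
          simp [Set.indicator_apply, h1, h2]
    _ ≤ ENNReal.ofReal (2 ^ d * ‖z‖) := volume_slab hd hp ‖z‖ (norm_nonneg z)

end Slab

section Scaling
variable {d : ℕ}

lemma tail_scaling (K : Ed d → ℝ) (hK : Measurable K) {ε : ℝ} (hε : 0 < ε)
    (c : ℝ) (hc : 0 ≤ c) (hKnn : ∀ x, 0 ≤ K x) (M : ℝ) :
    ∫⁻ z in {z : Ed d | M ≤ ‖z‖}, ENNReal.ofReal (Keps K ε z) * ENNReal.ofReal (c * ‖z‖)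
      = ENNReal.ofReal (c * ε) *
          ∫⁻ w in {w : Ed d | M / ε ≤ ‖w‖}, ENNReal.ofReal (K w * ‖w‖) := by
  classical
  have hεd : (0:ℝ) < ε ^ d := pow_pos hε d
  have hsetM : MeasurableSet {z : Ed d | M ≤ ‖z‖} :=
    (isClosed_le continuous_const continuous_norm).measurableSet
  have hsetM' : MeasurableSet {w : Ed d | M / ε ≤ ‖w‖} :=
    (isClosed_le continuous_const continuous_norm).measurableSet
  set g : Ed d → ℝ≥0∞ := fun w => ({w : Ed d | M / ε ≤ ‖w‖}).indicator
    (fun w => ENNReal.ofReal ((ε ^ d)⁻¹ * K w) * ENNReal.ofReal (c * (ε * ‖w‖))) w with hg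
  have hgmeas : Measurable g := by
    apply Measurable.indicator _ hsetM'
    exact (ENNReal.measurable_ofReal.comp (measurable_const.mul hK)).mul
      (ENNReal.measurable_ofReal.comp (measurable_const.mul (measurable_norm.const_mul ε)))
  have hpt : ∀ z : Ed d, ({z : Ed d | M ≤ ‖z‖}).indicator
      (fun z => ENNReal.ofReal (Keps K ε z) * ENNReal.ofReal (c * ‖z‖)) z = g (ε⁻¹ • z) := by
    intro z
    have hnrm : ‖ε⁻¹ • z‖ = ε⁻¹ * ‖z‖ := by
      rw [norm_smul, Real.norm_eq_abs, abs_of_pos (inv_pos.mpr hε)]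
    have hmem : (M / ε ≤ ‖ε⁻¹ • z‖) ↔ M ≤ ‖z‖ := by
      rw [hnrm, div_eq_inv_mul]
      exact mul_le_mul_iff_right₀ (inv_pos.mpr hε)
    show _ = ({w : Ed d | M / ε ≤ ‖w‖}).indicator
      (fun w => ENNReal.ofReal ((ε ^ d)⁻¹ * K w) * ENNReal.ofReal (c * (ε * ‖w‖))) (ε⁻¹ • z)
    by_cases hz : M ≤ ‖z‖
    · rw [Set.indicator_of_mem (by exact hz), Set.indicator_of_mem (by
        simp only [Set.mem_setOf_eq]; exact hmem.mpr hz)]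
      rw [hnrm]
      rw [show ε * (ε⁻¹ * ‖z‖) = ‖z‖ by field_simp]
      rfl
    · rw [Set.indicator_of_notMem (by exact hz), Set.indicator_of_notMem (by
        simp only [Set.mem_setOf_eq]; exact fun hc2 => hz (hmem.mp hc2))]
  have hLHS : ∫⁻ z in {z : Ed d | M ≤ ‖z‖},
      ENNReal.ofReal (Keps K ε z) * ENNReal.ofReal (c * ‖z‖) = ∫⁻ z, g (ε⁻¹ • z) := by
    rw [← lintegral_indicator hsetM]
    exact lintegral_congr hpt
  have hmap : ∫⁻ z, g (ε⁻¹ • z) = ENNReal.ofReal (ε ^ d) * ∫⁻ w, g w := by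
    have h1 : ∫⁻ z, g (ε⁻¹ • z) ∂volume = ∫⁻ y, g y ∂(Measure.map (ε⁻¹ • ·) volume) :=
      (lintegral_map hgmeas (measurable_const_smul ε⁻¹)).symm
    rw [h1, MeasureTheory.Measure.map_addHaar_smul volume (inv_ne_zero hε.ne'),
      lintegral_smul_measure]
    congr 1
    rw [finrank_euclideanSpace_fin]
    rw [← inv_pow, inv_inv, abs_of_pos hεd]
  have hfull : ∫⁻ w, g w = ENNReal.ofReal ((ε ^ d)⁻¹ * (c * ε)) *
      ∫⁻ w in {w : Ed d | M / ε ≤ ‖w‖}, ENNReal.ofReal (K w * ‖w‖) := by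
    rw [hg, lintegral_indicator hsetM']
    rw [← lintegral_const_mul' _ _ ENNReal.ofReal_ne_top]
    refine setLIntegral_congr_fun_ae hsetM' (Filter.Eventually.of_forall fun w _ => ?_)
    have e1 : ENNReal.ofReal ((ε ^ d)⁻¹ * K w) * ENNReal.ofReal (c * (ε * ‖w‖))
        = ENNReal.ofReal ((ε ^ d)⁻¹ * K w * (c * (ε * ‖w‖))) :=
      (ENNReal.ofReal_mul (mul_nonneg (inv_pos.mpr hεd).le (hKnn w))).symm
    have e2 : ENNReal.ofReal ((ε ^ d)⁻¹ * (c * ε)) * ENNReal.ofReal (K w * ‖w‖)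
        = ENNReal.ofReal ((ε ^ d)⁻¹ * (c * ε) * (K w * ‖w‖)) :=
      (ENNReal.ofReal_mul (by positivity)).symm
    rw [e1, e2]
    congr 1
    ring
  rw [hLHS, hmap, hfull, ← mul_assoc, ← ENNReal.ofReal_mul hεd.le]
  congr 2
  field_simp

lemma setOf_zero_le_norm_eq_univ : {z : Ed d | (0:ℝ) ≤ ‖z‖} = Set.univ := by
  ext z; simp [norm_nonneg]

end Scaling

section Tail
variable {d : ℕ}

lemma tendsto_tail (K : Ed d → ℝ) (hK : Measurable K) (hKnn : ∀ x, 0 ≤ K x)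
    (hKsum : Integrable (fun x : Ed d => K x * ‖x‖)) :
    Tendsto (fun M : ℝ => ∫⁻ w in {w : Ed d | M ≤ ‖w‖}, ENNReal.ofReal (K w * ‖w‖))
      atTop (𝓝 0) := by
  have hsetM : ∀ M : ℝ, MeasurableSet {w : Ed d | M ≤ ‖w‖} := fun M =>
    (isClosed_le continuous_const continuous_norm).measurableSet
  have hrw : ∀ M : ℝ, ∫⁻ w in {w : Ed d | M ≤ ‖w‖}, ENNReal.ofReal (K w * ‖w‖)
      = ∫⁻ w, ({w : Ed d | M ≤ ‖w‖}).indicator (fun w => ENNReal.ofReal (K w * ‖w‖)) w :=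
    fun M => (lintegral_indicator (hsetM M) _).symm
  simp only [hrw]
  have h0 : (0 : ℝ≥0∞) = ∫⁻ (_ : Ed d), 0 := lintegral_zero.symm
  rw [h0]
  apply tendsto_lintegral_filter_of_dominated_convergence
    (fun w => ENNReal.ofReal (K w * ‖w‖))
  · exact Filter.Eventually.of_forall fun M =>
      (ENNReal.measurable_ofReal.comp (hK.mul measurable_norm)).indicator (hsetM M)
  · exact Filter.Eventually.of_forall fun M =>
      Filter.Eventually.of_forall fun w => Set.indicator_le_self _ _ w
  · exact hKsum.lintegral_lt_top.ne
  · refine Filter.Eventually.of_forall fun w => ?_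
    refine Filter.Tendsto.congr' ?_ tendsto_const_nhds
    rw [Filter.EventuallyEq, Filter.eventually_atTop]
    exact ⟨‖w‖ + 1, fun M hM => (Set.indicator_of_notMem
      (by simp only [Set.mem_setOf_eq, not_le]; linarith) _).symm⟩

end Tail

end More

/-- For families of sets converging in `L¹(B)` to the halfspace `H` and agreeing with `H`
outside the closed ball of radius `1−δ`, the liminf of `ε⁻¹(J¹_ε(E_ε；B) − J¹_ε(H；B))` is
nonnegative. -/
theorem liminf_J1eps_diff_nonneg
    {d : ℕ} (hd : 1 ≤ d)
    (K : Ed d → ℝ) (hKmeas : Measurable K) (hKnonneg : ∀ x, 0 ≤ K x)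
    (hKeven : ∀ᵐ x ∂(volume : Measure (Ed d)), K (-x) = K x)
    (hKsum : Integrable (fun x : Ed d => K x * ‖x‖))
    (p : Ed d) (hp : ‖p‖ = 1)
    (δ : ℝ) (hδ : δ ∈ Set.Ioo (0 : ℝ) 1)
    (Efam : ℝ → Set (Ed d)) (hEmeas : ∀ ε, MeasurableSet (Efam ε))
    (hEH : ∀ ε, symmDiff (Efam ε) {x : Ed d | 0 < ⟪x, p⟫} ⊆
      Metric.closedBall (0 : Ed d) (1 - δ))
    (hconv : Tendsto (fun ε => ∫ x in Metric.ball (0 : Ed d) 1,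
        |(Efam ε).indicator (fun _ => (1 : ℝ)) x -
          ({x : Ed d | 0 < ⟪x, p⟫}.indicator (fun _ => (1 : ℝ))) x|)
      (𝓝[>] 0) (𝓝 0)) :
    (0 : EReal) ≤ liminf (fun ε =>
        ((ε⁻¹ : ℝ) : EReal) *
          ((J1eps K ε (Efam ε) : EReal) - (J1eps K ε {x : Ed d | 0 < ⟪x, p⟫} : EReal)))
      (𝓝[>] 0) := by
  classical
  obtain ⟨hδ0, hδ1⟩ := hδ
  have hH : MeasurableSet {x : Ed d | 0 < ⟪x, p⟫} := measurableSet_H p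
  set c : ℝ := 2 ^ d with hc
  have hc0 : (0:ℝ) ≤ c := by positivity
  set κ : ℝ → ℝ≥0∞ :=
    fun M => ∫⁻ w in {w : Ed d | M ≤ ‖w‖}, ENNReal.ofReal (K w * ‖w‖) with hκ
  have hκfin : ∀ M, κ M < ⊤ := fun M =>
    lt_of_le_of_lt (setLIntegral_le_lintegral _ _) hKsum.lintegral_lt_top
  set r : ℝ → ℝ := fun ε => 2⁻¹ * c * (κ (δ / ε)).toReal with hr
  -- eventual lower bound
  have hev : ∀ᶠ ε in 𝓝[>] (0:ℝ), ((-(r ε) : ℝ) : EReal) ≤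
      ((ε⁻¹ : ℝ) : EReal) *
        ((J1eps K ε (Efam ε) : EReal) - (J1eps K ε {x : Ed d | 0 < ⟪x, p⟫} : EReal)) := by
    filter_upwards [self_mem_nhdsWithin] with ε hε
    have hε0 : (0:ℝ) < ε := hε
    have hJE := J1eps_eq_z K hKmeas ε (hEmeas ε)
    have hJH := J1eps_eq_z K hKmeas ε hH
    set s : Set (Ed d) := {z : Ed d | ‖z‖ < δ} with hs
    have hsm : MeasurableSet s := (isOpen_lt continuous_norm continuous_const).measurableSet
    have hscompl : sᶜ = {z : Ed d | δ ≤ ‖z‖} := by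
      ext z; simp [hs, not_lt]
    have hsplit : (∫⁻ z, ENNReal.ofReal (Keps K ε z) * GG {x : Ed d | 0 < ⟪x, p⟫} z)
        = (∫⁻ z in s, ENNReal.ofReal (Keps K ε z) * GG {x : Ed d | 0 < ⟪x, p⟫} z)
          + (∫⁻ z in {z : Ed d | δ ≤ ‖z‖},
              ENNReal.ofReal (Keps K ε z) * GG {x : Ed d | 0 < ⟪x, p⟫} z) := by
      rw [← hscompl]
      exact (lintegral_add_compl _ hsm).symm
    have hnear : (∫⁻ z in s, ENNReal.ofReal (Keps K ε z) * GG {x : Ed d | 0 < ⟪x, p⟫} z)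
        ≤ ∫⁻ z in s, ENNReal.ofReal (Keps K ε z) * GG (Efam ε) z := by
      apply lintegral_mono_ae
      rw [ae_restrict_iff' hsm]
      exact Filter.Eventually.of_forall fun z hz =>
        mul_le_mul_right (key_mono hp hδ0 hδ1 (hEmeas ε) (hEH ε) hz) _
    have hfar : (∫⁻ z in {z : Ed d | δ ≤ ‖z‖},
          ENNReal.ofReal (Keps K ε z) * GG {x : Ed d | 0 < ⟪x, p⟫} z)
        ≤ ENNReal.ofReal (c * ε) * κ (δ / ε) := by
      calc (∫⁻ z in {z : Ed d | δ ≤ ‖z‖},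
            ENNReal.ofReal (Keps K ε z) * GG {x : Ed d | 0 < ⟪x, p⟫} z)
          ≤ ∫⁻ z in {z : Ed d | δ ≤ ‖z‖},
              ENNReal.ofReal (Keps K ε z) * ENNReal.ofReal (c * ‖z‖) :=
            lintegral_mono fun z => mul_le_mul_right (GG_slab hd hp z) _
        _ = ENNReal.ofReal (c * ε) * κ (δ / ε) :=
            tail_scaling K hKmeas hε0 c hc0 hKnonneg δ
    have hfull : (∫⁻ z, ENNReal.ofReal (Keps K ε z) * GG {x : Ed d | 0 < ⟪x, p⟫} z)
        ≤ ENNReal.ofReal (c * ε) * κ 0 := by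
      have h0 : {z : Ed d | (0:ℝ) ≤ ‖z‖} = Set.univ := setOf_zero_le_norm_eq_univ
      have h1 : (∫⁻ z, ENNReal.ofReal (Keps K ε z) * GG {x : Ed d | 0 < ⟪x, p⟫} z)
          ≤ ∫⁻ z, ENNReal.ofReal (Keps K ε z) * ENNReal.ofReal (c * ‖z‖) :=
        lintegral_mono fun z => mul_le_mul_right (GG_slab hd hp z) _
      have h2 : (∫⁻ z, ENNReal.ofReal (Keps K ε z) * ENNReal.ofReal (c * ‖z‖))
          = ∫⁻ z in {z : Ed d | (0:ℝ) ≤ ‖z‖},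
              ENNReal.ofReal (Keps K ε z) * ENNReal.ofReal (c * ‖z‖) := by
        rw [h0, Measure.restrict_univ]
      have h3 := tail_scaling K hKmeas hε0 c hc0 hKnonneg (d := d) 0
      rw [zero_div] at h3
      calc (∫⁻ z, ENNReal.ofReal (Keps K ε z) * GG {x : Ed d | 0 < ⟪x, p⟫} z)
          ≤ ∫⁻ z, ENNReal.ofReal (Keps K ε z) * ENNReal.ofReal (c * ‖z‖) := h1
        _ = ENNReal.ofReal (c * ε) * κ 0 := by rw [h2, h3]
    set Tb : ℝ≥0∞ := 2⁻¹ * (ENNReal.ofReal (c * ε) * κ (δ / ε)) with hTb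
    have hTbne : Tb ≠ ⊤ := by
      rw [hTb]
      exact ENNReal.mul_ne_top (by norm_num)
        (ENNReal.mul_ne_top ENNReal.ofReal_ne_top (hκfin _).ne)
    have hJHne : J1eps K ε {x : Ed d | 0 < ⟪x, p⟫} ≠ ⊤ := by
      refine ne_top_of_le_ne_top ?_ (le_trans (le_of_eq hJH) (mul_le_mul_right hfull _))
      exact ENNReal.mul_ne_top (by norm_num)
        (ENNReal.mul_ne_top ENNReal.ofReal_ne_top (hκfin _).ne)
    have hmain : J1eps K ε {x : Ed d | 0 < ⟪x, p⟫} ≤ J1eps K ε (Efam ε) + Tb := by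
      calc J1eps K ε {x : Ed d | 0 < ⟪x, p⟫}
          = 2⁻¹ * ((∫⁻ z in s, ENNReal.ofReal (Keps K ε z) * GG {x : Ed d | 0 < ⟪x, p⟫} z)
            + ∫⁻ z in {z : Ed d | δ ≤ ‖z‖},
                ENNReal.ofReal (Keps K ε z) * GG {x : Ed d | 0 < ⟪x, p⟫} z) := by
            rw [hJH, hsplit]
        _ = 2⁻¹ * (∫⁻ z in s, ENNReal.ofReal (Keps K ε z) * GG {x : Ed d | 0 < ⟪x, p⟫} z)
            + 2⁻¹ * ∫⁻ z in {z : Ed d | δ ≤ ‖z‖},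
                ENNReal.ofReal (Keps K ε z) * GG {x : Ed d | 0 < ⟪x, p⟫} z := mul_add _ _ _
        _ ≤ 2⁻¹ * (∫⁻ z in s, ENNReal.ofReal (Keps K ε z) * GG (Efam ε) z)
            + 2⁻¹ * (ENNReal.ofReal (c * ε) * κ (δ / ε)) :=
            add_le_add (mul_le_mul_right hnear _) (mul_le_mul_right hfar _)
        _ ≤ J1eps K ε (Efam ε) + Tb := by
            rw [hTb, hJE]
            exact add_le_add_left (mul_le_mul_right
              (lintegral_mono' Measure.restrict_le_self le_rfl) _) _
    have hTbval : Tb.toReal = ε * r ε := by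
      rw [hTb, ENNReal.toReal_mul, ENNReal.toReal_mul, ENNReal.toReal_ofReal (by positivity),
        hr]
      simp only [ENNReal.toReal_inv, ENNReal.toReal_ofNat]
      ring
    by_cases hJEtop : J1eps K ε (Efam ε) = ⊤
    · rw [hJEtop]
      have hcoe : ((J1eps K ε {x : Ed d | 0 < ⟪x, p⟫} : ℝ≥0∞) : EReal)
          = (((J1eps K ε {x : Ed d | 0 < ⟪x, p⟫}).toReal : ℝ) : EReal) := by
        rw [← EReal.toReal_coe_ennreal]
        rw [EReal.coe_toReal (by rw [ne_eq, EReal.coe_ennreal_eq_top_iff]; exact hJHne)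
          (EReal.coe_ennreal_ne_bot _)]
      rw [hcoe]
      rw [show ((⊤ : ℝ≥0∞) : EReal) = (⊤ : EReal) from rfl]
      rw [EReal.top_sub_coe, EReal.coe_mul_top_of_pos (by exact_mod_cast inv_pos.mpr hε0)]
      exact le_top
    · have hA : ((J1eps K ε (Efam ε) : ℝ≥0∞) : EReal)
          = (((J1eps K ε (Efam ε)).toReal : ℝ) : EReal) := by
        rw [← EReal.toReal_coe_ennreal]
        rw [EReal.coe_toReal (by rw [ne_eq, EReal.coe_ennreal_eq_top_iff]; exact hJEtop)
          (EReal.coe_ennreal_ne_bot _)]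
      have hB : ((J1eps K ε {x : Ed d | 0 < ⟪x, p⟫} : ℝ≥0∞) : EReal)
          = (((J1eps K ε {x : Ed d | 0 < ⟪x, p⟫}).toReal : ℝ) : EReal) := by
        rw [← EReal.toReal_coe_ennreal]
        rw [EReal.coe_toReal (by rw [ne_eq, EReal.coe_ennreal_eq_top_iff]; exact hJHne)
          (EReal.coe_ennreal_ne_bot _)]
      rw [hA, hB, ← EReal.coe_sub, ← EReal.coe_mul, EReal.coe_le_coe_iff]
      set A := (J1eps K ε (Efam ε)).toReal with hAdef
      set Bv := (J1eps K ε {x : Ed d | 0 < ⟪x, p⟫}).toReal with hBdef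
      have hBle : Bv ≤ A + Tb.toReal := by
        have := ENNReal.toReal_mono (ENNReal.add_ne_top.mpr ⟨hJEtop, hTbne⟩) hmain
        rwa [ENNReal.toReal_add hJEtop hTbne] at this
      have h1 : -(ε * r ε) ≤ A - Bv := by
        rw [hTbval] at hBle
        linarith
      calc -(r ε) = ε⁻¹ * (-(ε * r ε)) := by field_simp
        _ ≤ ε⁻¹ * (A - Bv) := mul_le_mul_of_nonneg_left h1 (inv_nonneg.mpr hε0.le)
  -- the lower bound tends to zero
  have h1 : Tendsto (fun ε : ℝ => δ / ε) (𝓝[>] (0:ℝ)) atTop := by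
    simp only [div_eq_mul_inv]
    exact Filter.Tendsto.const_mul_atTop hδ0 tendsto_inv_nhdsGT_zero
  have h2 : Tendsto (fun ε : ℝ => κ (δ / ε)) (𝓝[>] (0:ℝ)) (𝓝 0) :=
    (tendsto_tail K hKmeas hKnonneg hKsum).comp h1
  have h3 : Tendsto (fun ε : ℝ => (κ (δ / ε)).toReal) (𝓝[>] (0:ℝ)) (𝓝 0) := by
    have := (ENNReal.tendsto_toReal (by simp : (0:ℝ≥0∞) ≠ ⊤)).comp h2
    exact this
  have h4 : Tendsto (fun ε => -(r ε)) (𝓝[>] (0:ℝ)) (𝓝 0) := by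
    have := (h3.const_mul (2⁻¹ * c)).neg
    simp only [mul_zero, neg_zero] at this
    convert this using 2
  have h5 : Tendsto (fun ε => ((-(r ε) : ℝ) : EReal)) (𝓝[>] (0:ℝ)) (𝓝 (0:EReal)) := by
    rw [show (0:EReal) = ((0:ℝ):EReal) by simp]
    exact EReal.tendsto_coe.mpr h4
  calc (0:EReal) = liminf (fun ε => ((-(r ε) : ℝ) : EReal)) (𝓝[>] (0:ℝ)) :=
        (h5.liminf_eq).symm
    _ ≤ liminf (fun ε =>
        ((ε⁻¹ : ℝ) : EReal) *
          ((J1eps K ε (Efam ε) : EReal) - (J1eps K ε {x : Ed d | 0 < ⟪x, p⟫} : EReal)))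
      (𝓝[>] 0) := liminf_le_liminf hev
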